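/- arXiv:1505.02484 — 2 statements merged into one kernel-verified Lean document; each statement's English description precedes it below -/
import Mathlib

section
/- For the random walk on the network (G, c) and every vertex v, the following identity holds in the extended nonnegative reals: Σ_u c(u) · q_last(u, v) = c(v) · q_0(v) · Σ_{n≥0} p_{2n}(v, v), where the sum on the left is over all vertices u. -/
open MeasureTheory
open scoped ENNReal NNReal Classical

namespace CollisionsStmt

variable {V : Type*}

/-- The total conductance `c(u) = Σ_v c(u,v)` at a vertex `u` of the network. -/
noncomputable def cWeight (c : V → V → ℝ≥0) (u : V) : ℝ≥0∞ := ∑' v, (c u v : ℝ≥0∞)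

/-- One-step transition probabilities of the random walk on the network `(G, c)`:
`p(u,v) = c(u,v)/c(u)`. -/
noncomputable def netStep (c : V → V → ℝ≥0) (u v : V) : ℝ≥0∞ :=
  (c u v : ℝ≥0∞) / cWeight c u

/-- The `n`-step transition probabilities of the random walk on the network `(G, c)`. -/
noncomputable def netPn (c : V → V → ℝ≥0) : ℕ → V → V → ℝ≥0∞
  | 0, u, v => if u = v then 1 else 0
  | n + 1, u, v => ∑' w, netStep c u w * netPn c n w v

/-- The graph underlying the network: an edge between `u` and `v` whenever `c(u,v) > 0`. -/
def netGraph (c : V → V → ℝ≥0) : SimpleGraph V :=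
  SimpleGraph.fromRel (fun u v => c u v ≠ 0)

/-- `μ` is the law (on path space, via the Ionescu–Tulcea trajectory construction) of
two independent walks with one-step transition probabilities `p`, started at `a` and `b`
respectively; equivalently, the Markov chain on `V × V` with kernel `p ⊗ p` started at `(a, b)`.
The law is characterized by being a probability measure with the prescribed
finite-dimensional (cylinder) distributions. -/
def IsPairWalkMeasure [MeasurableSpace V] (p : V → V → ℝ≥0∞) (a b : V)
    (μ : Measure (ℕ → V × V)) : Prop :=
  IsProbabilityMeasure μ ∧
    ∀ (n : ℕ) (x : ℕ → V × V),
      μ {ω | ∀ i ≤ n, ω i = x i} =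
        (if x 0 = (a, b) then (1 : ℝ≥0∞) else 0) *
          ∏ i ∈ Finset.range n, (p (x i).1 (x (i + 1)).1 * p (x i).2 (x (i + 1)).2)

/-- The event that the two walks do not collide at any time `n ≥ 1`. -/
def noCollision : Set (ℕ → V × V) := {ω | ∀ n ≥ 1, (ω n).1 ≠ (ω n).2}

/-- The event that the two walks have their last collision at the vertex `v`: for some
`n ≥ 0`, `X_n = Y_n = v` and `X_m ≠ Y_m` for all `m > n`. -/
def lastCollisionAt (v : V) : Set (ℕ → V × V) :=
  {ω | ∃ n : ℕ, ω n = (v, v) ∧ ∀ m > n, (ω m).1 ≠ (ω m).2}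

/-- The event that the two walks collide at only finitely many times. -/
def finCollisions : Set (ℕ → V × V) := {ω | {n : ℕ | (ω n).1 = (ω n).2}.Finite}

/-- The event that the two walks collide at infinitely many times. -/
def infCollisions : Set (ℕ → V × V) := {ω | {n : ℕ | (ω n).1 = (ω n).2}.Infinite}

lemma cWeight_ne_top (c : V → V → ℝ≥0) (hloc : ∀ u : V, {v : V | c u v ≠ 0}.Finite)
    (u : V) : cWeight c u ≠ ∞ := by
  have : cWeight c u = ∑ v ∈ (hloc u).toFinset, (c u v : ℝ≥0∞) := by
    refine tsum_eq_sum ?_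
    intro b hb
    simp only [Set.Finite.mem_toFinset, Set.mem_setOf_eq, not_not] at hb
    simp [hb]
  rw [this]
  exact ENNReal.sum_ne_top.mpr (fun a _ => ENNReal.coe_ne_top)

lemma step_sum (c : V → V → ℝ≥0) (hloc : ∀ u : V, {v : V | c u v ≠ 0}.Finite)
    (hpos : ∀ u : V, 0 < cWeight c u) (u : V) : ∑' w, netStep c u w = 1 := by
  unfold netStep
  simp_rw [div_eq_mul_inv]
  rw [ENNReal.tsum_mul_right]
  exact ENNReal.mul_inv_cancel (hpos u).ne' (cWeight_ne_top c hloc u)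

lemma cW_mul_step (c : V → V → ℝ≥0) (hloc : ∀ u : V, {v : V | c u v ≠ 0}.Finite)
    (hpos : ∀ u : V, 0 < cWeight c u) (u w : V) :
    cWeight c u * netStep c u w = (c u w : ℝ≥0∞) := by
  rw [mul_comm]
  exact ENNReal.div_mul_cancel (hpos u).ne' (cWeight_ne_top c hloc u)

lemma netPn_le_one (c : V → V → ℝ≥0) (hloc : ∀ u : V, {v : V | c u v ≠ 0}.Finite)
    (hpos : ∀ u : V, 0 < cWeight c u) : ∀ n (u v : V), netPn c n u v ≤ 1 := by
  intro n
  induction n with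
  | zero => intro u v; simp only [netPn]; split <;> simp
  | succ n ih =>
    intro u v
    calc (∑' w, netStep c u w * netPn c n w v) ≤ ∑' w, netStep c u w * 1 :=
          ENNReal.tsum_le_tsum (fun w => mul_le_mul_right (ih w v) _)
      _ = 1 := by simpa using step_sum c hloc hpos u

lemma netPn_chapman (c : V → V → ℝ≥0) : ∀ (m n : ℕ) (u v : V),
    netPn c (m + n) u v = ∑' w, netPn c m u w * netPn c n w v := by
  intro m
  induction m with
  | zero =>
    intro n u v
    simp only [Nat.zero_add, netPn]
    rw [tsum_eq_single u (fun w hw => by simp [Ne.symm hw])]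
    simp
  | succ m ih =>
    intro n u v
    have h1 : m + 1 + n = (m + n) + 1 := by omega
    rw [h1]
    show ∑' w, netStep c u w * netPn c (m + n) w v = _
    calc ∑' w, netStep c u w * netPn c (m + n) w v
        = ∑' w, netStep c u w * ∑' z, netPn c m w z * netPn c n z v := by
          simp_rw [ih]
      _ = ∑' w, ∑' z, netStep c u w * netPn c m w z * netPn c n z v := by
          congr 1; ext w
          rw [← ENNReal.tsum_mul_left]
          congr 1; ext z; ring
      _ = ∑' z, ∑' w, netStep c u w * netPn c m w z * netPn c n z v := ENNReal.tsum_comm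
      _ = ∑' z, (∑' w, netStep c u w * netPn c m w z) * netPn c n z v := by
          congr 1; ext z
          rw [ENNReal.tsum_mul_right]
      _ = ∑' z, netPn c (m + 1) u z * netPn c n z v := rfl

lemma netPn_succ_right (c : V → V → ℝ≥0) (n : ℕ) (u v : V) :
    netPn c (n + 1) u v = ∑' w, netPn c n u w * netStep c w v := by
  rw [netPn_chapman c n 1 u v]
  congr 1; ext w
  congr 1
  show (∑' z, netStep c w z * netPn c 0 z v) = _
  refine (tsum_eq_single v ?_).trans (by simp [netPn])
  intro z hz
  simp [netPn, hz]

lemma netPn_rev (c : V → V → ℝ≥0) (hloc : ∀ u : V, {v : V | c u v ≠ 0}.Finite)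
    (hpos : ∀ u : V, 0 < cWeight c u) (hsymm : ∀ u v : V, c u v = c v u) :
    ∀ (n : ℕ) (u v : V), cWeight c u * netPn c n u v = cWeight c v * netPn c n v u := by
  intro n
  induction n with
  | zero =>
    intro u v
    simp only [netPn]
    rcases eq_or_ne u v with h | h
    · subst h; rfl
    · simp [h, Ne.symm h]
  | succ n ih =>
    intro u v
    show cWeight c u * ∑' w, netStep c u w * netPn c n w v = _
    calc cWeight c u * ∑' w, netStep c u w * netPn c n w v
        = ∑' w, cWeight c u * netStep c u w * netPn c n w v := by
          rw [← ENNReal.tsum_mul_left]; congr 1; ext w; ring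
      _ = ∑' w, (c u w : ℝ≥0∞) * netPn c n w v := by
          simp_rw [cW_mul_step c hloc hpos]
      _ = ∑' w, cWeight c w * netStep c w u * netPn c n w v := by
          simp_rw [cW_mul_step c hloc hpos]
          congr 1; ext w; rw [hsymm u w]
      _ = ∑' w, netStep c w u * (cWeight c v * netPn c n v w) := by
          congr 1; ext w; rw [← ih w v]; ring
      _ = cWeight c v * ∑' w, netPn c n v w * netStep c w u := by
          rw [← ENNReal.tsum_mul_left]; congr 1; ext w; ring
      _ = cWeight c v * netPn c (n + 1) v u := by
          rw [netPn_succ_right]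

lemma key_sum (c : V → V → ℝ≥0) (hloc : ∀ u : V, {v : V | c u v ≠ 0}.Finite)
    (hpos : ∀ u : V, 0 < cWeight c u) (hsymm : ∀ u v : V, c u v = c v u) (n : ℕ) (v : V) :
    ∑' u, cWeight c u * (netPn c n u v * netPn c n u v)
      = cWeight c v * netPn c (2 * n) v v := by
  calc ∑' u, cWeight c u * (netPn c n u v * netPn c n u v)
      = ∑' u, cWeight c v * (netPn c n v u * netPn c n u v) := by
        congr 1; ext u
        rw [← mul_assoc, netPn_rev c hloc hpos hsymm, mul_assoc]
    _ = cWeight c v * ∑' u, netPn c n v u * netPn c n u v := ENNReal.tsum_mul_left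
    _ = cWeight c v * netPn c (n + n) v v := by rw [netPn_chapman]
    _ = cWeight c v * netPn c (2 * n) v v := by rw [two_mul]

/-- Extend a finite path to an infinite one, freezing the last value. -/
def ext (N : ℕ) (y : Fin (N + 1) → V × V) : ℕ → V × V :=
  fun i => y ⟨min i N, by omega⟩

lemma ext_eq {N : ℕ} (y : Fin (N + 1) → V × V) {i : ℕ} (h : i ≤ N) :
    ext N y i = y ⟨i, by omega⟩ := by
  simp [ext, Nat.min_eq_left h]

/-- The weight of a path over the first `N` steps. -/
noncomputable def W (p : V → V → ℝ≥0∞) (N : ℕ) (x : ℕ → V × V) : ℝ≥0∞ :=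
  ∏ i ∈ Finset.range N, (p (x i).1 (x (i + 1)).1 * p (x i).2 (x (i + 1)).2)

lemma cylinder_measurable [MeasurableSpace V] [DiscreteMeasurableSpace V] [Countable V]
    (N : ℕ) (z : ℕ → V × V) : MeasurableSet {ω : ℕ → V × V | ∀ i ≤ N, ω i = z i} := by
  have : {ω : ℕ → V × V | ∀ i ≤ N, ω i = z i}
      = ⋂ i ∈ Finset.range (N + 1), (fun ω : ℕ → V × V => ω i) ⁻¹' {z i} := by
    ext ω
    simp only [Set.mem_setOf_eq, Set.mem_iInter, Finset.mem_range, Set.mem_preimage,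
      Set.mem_singleton_iff]
    constructor
    · intro h i hi; exact h i (by omega)
    · intro h i hi; exact h i (by omega)
  rw [this]
  exact MeasurableSet.biInter (Set.to_countable _)
    (fun i _ => measurable_pi_apply i (MeasurableSet.singleton _))

lemma coord_measurable [MeasurableSpace V] [DiscreteMeasurableSpace V] [Countable V]
    (n : ℕ) (s : Set (V × V)) : MeasurableSet {ω : ℕ → V × V | ω n ∈ s} :=
  measurable_pi_apply n (s.to_countable.measurableSet)

/-- The measure of an event depending only on the first `N+1` coordinates. -/
lemma measure_fin_event [MeasurableSpace V] [DiscreteMeasurableSpace V] [Countable V]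
    {p : V → V → ℝ≥0∞} {a : V} {μ : Measure (ℕ → V × V)}
    (hμ : IsPairWalkMeasure p a a μ) (N : ℕ) (Q : (ℕ → V × V) → Prop)
    (hQ : ∀ ω ω' : ℕ → V × V, (∀ i ≤ N, ω i = ω' i) → Q ω → Q ω') :
    μ {ω | Q ω} = ∑' y : Fin (N + 1) → V × V,
      (if Q (ext N y) then 1 else 0) *
        ((if ext N y 0 = (a, a) then 1 else 0) * W p N (ext N y)) := by
  set s : (Fin (N + 1) → V × V) → Set (ℕ → V × V) := fun y =>
    if Q (ext N y) then {ω | ∀ i ≤ N, ω i = ext N y i} else ∅ with hs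
  have hcover : {ω | Q ω} = ⋃ y, s y := by
    ext ω
    simp only [Set.mem_setOf_eq, Set.mem_iUnion, hs]
    constructor
    · intro hω
      refine ⟨fun i => ω i.1, ?_⟩
      have hagree : ∀ i ≤ N, ω i = ext N (fun i : Fin (N + 1) => ω i.1) i := by
        intro i hi; rw [ext_eq _ hi]
      rw [if_pos (hQ ω _ hagree hω)]
      exact hagree
    · rintro ⟨y, hy⟩
      by_cases h : Q (ext N y)
      · rw [if_pos h] at hy
        exact hQ (ext N y) ω (fun i hi => (hy i hi).symm) h
      · rw [if_neg h] at hy; exact absurd hy (Set.notMem_empty ω)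
  have hdisj : Pairwise (Function.onFun Disjoint s) := by
    intro y y' hne
    simp only [Function.onFun, hs]
    split <;> split <;> try simp
    refine Set.disjoint_left.mpr ?_
    intro ω hω hω'
    apply hne
    funext i
    have h1 := hω i.1 (by omega)
    have h2 := hω' i.1 (by omega)
    rw [ext_eq _ (by omega : (i : ℕ) ≤ N)] at h1 h2
    exact h1.symm.trans h2
  have hmeas : ∀ y, MeasurableSet (s y) := by
    intro y
    simp only [hs]
    split
    · exact cylinder_measurable N _
    · exact MeasurableSet.empty
  rw [hcover, measure_iUnion hdisj hmeas]
  congr 1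
  ext y
  simp only [hs]
  split
  · rw [hμ.2 N (ext N y), one_mul]; rfl
  · simp

lemma ext_cons_zero (N : ℕ) (q : V × V) (z : Fin (N + 1) → V × V) :
    ext (N + 1) (Fin.cons q z) 0 = q := rfl

lemma ext_cons_succ (N : ℕ) (q : V × V) (z : Fin (N + 1) → V × V) (i : ℕ) :
    ext (N + 1) (Fin.cons q z) (i + 1) = ext N z i := by
  unfold ext
  have h : (⟨min (i + 1) (N + 1), by omega⟩ : Fin (N + 1 + 1))
      = Fin.succ ⟨min i N, by omega⟩ := by
    apply Fin.ext
    simp only [Fin.val_succ]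
    omega
  rw [h, Fin.cons_succ]

lemma W_ext_cons (p : V → V → ℝ≥0∞) (N : ℕ) (q : V × V) (z : Fin (N + 1) → V × V) :
    W p (N + 1) (ext (N + 1) (Fin.cons q z))
      = (p q.1 (ext N z 0).1 * p q.2 (ext N z 0).2) * W p N (ext N z) := by
  unfold W
  rw [Finset.prod_range_succ']
  have h1 : ∀ i : ℕ, ext (N + 1) (Fin.cons q z) (i + 1) = ext N z i := ext_cons_succ N q z
  simp only [h1, ext_cons_zero]
  ring

noncomputable def Fk (p : V → V → ℝ≥0∞) (v : V) (k : ℕ) (n : ℕ) (r : V × V) : ℝ≥0∞ :=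
  ∑' y : Fin (k + n + 1) → V × V,
    (if ext (k + n) y 0 = r ∧ ext (k + n) y n = (v, v) ∧
        (∀ m, n < m → m ≤ n + k → (ext (k + n) y m).1 ≠ (ext (k + n) y m).2)
      then (1 : ℝ≥0∞) else 0) * W p (k + n) (ext (k + n) y)

lemma Fk_succ (p : V → V → ℝ≥0∞) (v : V) (k n : ℕ) (r : V × V) :
    Fk p v k (n + 1) r = ∑' w : V × V, (p r.1 w.1 * p r.2 w.2) * Fk p v k n w := by
  let e : ((V × V) × (Fin (k + n + 1) → V × V)) ≃ (Fin (k + n + 1 + 1) → V × V) :=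
    (Fin.consEquiv (fun _ : Fin (k + n + 1 + 1) => V × V))
  have he : ∀ qz : (V × V) × (Fin (k + n + 1) → V × V), e qz = Fin.cons qz.1 qz.2 :=
    fun qz => rfl
  have lhs_eq : Fk p v k (n + 1) r
      = ∑' y : Fin (k + n + 1 + 1) → V × V,
        (if ext (k + n + 1) y 0 = r ∧ ext (k + n + 1) y (n + 1) = (v, v) ∧
            (∀ m, n + 1 < m → m ≤ n + 1 + k →
              (ext (k + n + 1) y m).1 ≠ (ext (k + n + 1) y m).2)
          then (1 : ℝ≥0∞) else 0) * W p (k + n + 1) (ext (k + n + 1) y) := rfl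
  rw [lhs_eq, ← Equiv.tsum_eq e]
  rw [ENNReal.tsum_prod']
  calc (∑' (q : V × V) (z : Fin (k + n + 1) → V × V),
        (if ext (k + n + 1) (e (q, z)) 0 = r ∧ ext (k + n + 1) (e (q, z)) (n+1) = (v, v) ∧
            (∀ m, n + 1 < m → m ≤ n + 1 + k →
              (ext (k + n + 1) (e (q,z)) m).1 ≠ (ext (k + n + 1) (e (q,z)) m).2)
          then (1 : ℝ≥0∞) else 0) * W p (k + n + 1) (ext (k + n + 1) (e (q,z))))
      = ∑' (q : V × V), (if q = r then (1:ℝ≥0∞) else 0) *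
          ∑' (z : Fin (k + n + 1) → V × V),
            ((p q.1 (ext (k+n) z 0).1 * p q.2 (ext (k+n) z 0).2) *
            ((if ext (k + n) z n = (v, v) ∧
                (∀ m, n < m → m ≤ n + k → (ext (k + n) z m).1 ≠ (ext (k + n) z m).2)
              then (1 : ℝ≥0∞) else 0) * W p (k + n) (ext (k + n) z))) := by
        congr 1; ext q
        rw [← ENNReal.tsum_mul_left]
        congr 1; ext z
        rw [he]
        have hz : ext (k + n + 1) (Fin.cons q z) 0 = q := ext_cons_zero _ q z
        have hs : ∀ i : ℕ, ext (k + n + 1) (Fin.cons q z) (i + 1) = ext (k + n) z i :=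
          ext_cons_succ _ q z
        rw [W_ext_cons p _ q z, hz, hs n]
        have hiff : (∀ m, n + 1 < m → m ≤ n + 1 + k →
              (ext (k + n + 1) (Fin.cons q z) m).1 ≠ (ext (k + n + 1) (Fin.cons q z) m).2)
            ↔ (∀ m, n < m → m ≤ n + k → (ext (k + n) z m).1 ≠ (ext (k + n) z m).2) := by
          constructor
          · intro h m h1 h2
            have := h (m + 1) (by omega) (by omega)
            rwa [hs m] at this
          · intro h m h1 h2
            obtain ⟨m', rfl⟩ : ∃ m', m = m' + 1 := ⟨m - 1, by omega⟩
            rw [hs m']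
            exact h m' (by omega) (by omega)
        rw [if_congr (and_congr Iff.rfl (and_congr Iff.rfl hiff)) rfl rfl]
        by_cases hq : q = r
        · by_cases hX : ext (k + n) z n = (v, v) ∧
              (∀ m, n < m → m ≤ n + k → (ext (k + n) z m).1 ≠ (ext (k + n) z m).2)
          · rw [if_pos ⟨hq, hX⟩, if_pos hq, if_pos hX]; ring
          · rw [if_neg (fun hc => hX ⟨hc.2.1, hc.2.2⟩), if_neg hX]; ring
        · rw [if_neg (fun hc => hq hc.1), if_neg hq]; ring
    _ = ∑' (z : Fin (k + n + 1) → V × V),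
          ((p r.1 (ext (k+n) z 0).1 * p r.2 (ext (k+n) z 0).2) *
          ((if ext (k + n) z n = (v, v) ∧
              (∀ m, n < m → m ≤ n + k → (ext (k + n) z m).1 ≠ (ext (k + n) z m).2)
            then (1 : ℝ≥0∞) else 0) * W p (k + n) (ext (k + n) z))) := by
        rw [tsum_eq_single r (fun q hq => by rw [if_neg hq, zero_mul])]
        rw [if_pos rfl, one_mul]
    _ = ∑' (z : Fin (k + n + 1) → V × V), ∑' (w : V × V),
          (if ext (k+n) z 0 = w then (1:ℝ≥0∞) else 0) *
          ((p r.1 w.1 * p r.2 w.2) *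
          ((if ext (k + n) z n = (v, v) ∧
              (∀ m, n < m → m ≤ n + k → (ext (k + n) z m).1 ≠ (ext (k + n) z m).2)
            then (1 : ℝ≥0∞) else 0) * W p (k + n) (ext (k + n) z))) := by
        congr 1; ext z
        rw [tsum_eq_single (ext (k+n) z 0) (fun w hw => by rw [if_neg (fun hc => hw hc.symm), zero_mul])]
        rw [if_pos rfl, one_mul]
    _ = ∑' (w : V × V), (p r.1 w.1 * p r.2 w.2) * Fk p v k n w := by
        rw [ENNReal.tsum_comm]
        congr 1; ext w
        unfold Fk
        rw [← ENNReal.tsum_mul_left]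
        congr 1; ext z
        by_cases h : ext (k+n) z 0 = w
        · rw [if_pos h, h]
          by_cases h2 : ext (k + n) z n = (v, v) ∧
              (∀ m, n < m → m ≤ n + k → (ext (k + n) z m).1 ≠ (ext (k + n) z m).2)
          · rw [if_pos h2, if_pos ⟨rfl, h2⟩]; ring
          · rw [if_neg h2, if_neg (fun hc => h2 ⟨hc.2.1, hc.2.2⟩)]
            ring
        · simp [h]

lemma Fk_zero_ne (p : V → V → ℝ≥0∞) (v : V) (k : ℕ) {r : V × V} (hr : r ≠ (v, v)) :
    Fk p v k 0 r = 0 := by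
  unfold Fk
  convert tsum_zero with y
  rw [if_neg (fun hc => hr (hc.1.symm.trans hc.2.1)), zero_mul]

lemma Fk_eq (c : V → V → ℝ≥0) (v : V) (k : ℕ) :
    ∀ (n : ℕ) (a b : V), Fk (netStep c) v k n (a, b)
      = netPn c n a v * (netPn c n b v * Fk (netStep c) v k 0 (v, v)) := by
  intro n
  induction n with
  | zero =>
    intro a b
    by_cases ha : a = v
    · by_cases hb : b = v
      · subst ha; subst hb; simp [netPn]
      · rw [Fk_zero_ne _ _ _ (fun hc => hb (congrArg Prod.snd hc))]
        simp [netPn, hb]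
    · rw [Fk_zero_ne _ _ _ (fun hc => ha (congrArg Prod.fst hc))]
      simp [netPn, ha]
  | succ n ih =>
    intro a b
    rw [Fk_succ]
    calc ∑' w : V × V, (netStep c a w.1 * netStep c b w.2) * Fk (netStep c) v k n w
        = ∑' w : V × V, (netStep c a w.1 * netStep c b w.2) *
            (netPn c n w.1 v * (netPn c n w.2 v * Fk (netStep c) v k 0 (v, v))) := by
          congr 1; ext w; rw [ih w.1 w.2]
      _ = ∑' w1 : V, ∑' w2 : V, (netStep c a w1 * netPn c n w1 v) *
            ((netStep c b w2 * netPn c n w2 v) * Fk (netStep c) v k 0 (v, v)) := by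
          rw [ENNReal.tsum_prod']
          congr 1; ext w1; congr 1; ext w2; ring
      _ = ∑' w1 : V, (netStep c a w1 * netPn c n w1 v) *
            ((∑' w2 : V, netStep c b w2 * netPn c n w2 v) * Fk (netStep c) v k 0 (v, v)) := by
          congr 1; ext w1
          rw [ENNReal.tsum_mul_left, ENNReal.tsum_mul_right]
      _ = (∑' w1 : V, netStep c a w1 * netPn c n w1 v) *
            ((∑' w2 : V, netStep c b w2 * netPn c n w2 v) * Fk (netStep c) v k 0 (v, v)) := by
          rw [ENNReal.tsum_mul_right]
      _ = netPn c (n + 1) a v * (netPn c (n + 1) b v * Fk (netStep c) v k 0 (v, v)) := rfl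

lemma ind_mul' {P1 P2 P3 : Prop} {d1 : Decidable P1} {d2 : Decidable P2} {d3 : Decidable P3}
    (h : P3 ↔ (P1 ∧ P2)) (w : ℝ≥0∞) :
    (@ite _ P2 d2 (1:ℝ≥0∞) 0) * ((@ite _ P1 d1 (1:ℝ≥0∞) 0) * w)
      = (@ite _ P3 d3 (1:ℝ≥0∞) 0) * w := by
  by_cases h1 : P1 <;> by_cases h2 : P2 <;> by_cases h3 : P3 <;>
    simp [h1, h2, h3] <;> tauto

section Events
variable [MeasurableSpace V] [DiscreteMeasurableSpace V] [Countable V]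

def Bset (v : V) (n k : ℕ) : Set (ℕ → V × V) :=
  {ω | ω n = (v, v) ∧ ∀ m, n < m → m ≤ n + k → (ω m).1 ≠ (ω m).2}

def Cset (k : ℕ) : Set (ℕ → V × V) :=
  {ω | ∀ m, 1 ≤ m → m ≤ k → (ω m).1 ≠ (ω m).2}

def Aset (v : V) (n : ℕ) : Set (ℕ → V × V) :=
  {ω | ω n = (v, v) ∧ ∀ m, n < m → (ω m).1 ≠ (ω m).2}

lemma Bset_measurable (v : V) (n k : ℕ) : MeasurableSet (Bset v n k) := by
  have : Bset v n k = {ω : ℕ → V × V | ω n ∈ ({(v,v)} : Set (V × V))} ∩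
      ⋂ m : ℕ, {ω : ℕ → V × V | ω m ∈ {q : V × V | n < m → m ≤ n + k → q.1 ≠ q.2}} := by
    ext ω
    simp only [Bset, Set.mem_setOf_eq, Set.mem_inter_iff, Set.mem_iInter, Set.mem_singleton_iff]
  rw [this]
  exact (coord_measurable n _).inter (MeasurableSet.iInter fun m => coord_measurable m _)

lemma Cset_measurable (k : ℕ) : MeasurableSet (Cset (V := V) k) := by
  have : Cset (V := V) k =
      ⋂ m : ℕ, {ω : ℕ → V × V | ω m ∈ {q : V × V | 1 ≤ m → m ≤ k → q.1 ≠ q.2}} := by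
    ext ω
    simp only [Cset, Set.mem_setOf_eq, Set.mem_iInter]
  rw [this]
  exact MeasurableSet.iInter fun m => coord_measurable m _

lemma Aset_measurable (v : V) (n : ℕ) : MeasurableSet (Aset v n) := by
  have : Aset v n = {ω : ℕ → V × V | ω n ∈ ({(v,v)} : Set (V × V))} ∩
      ⋂ m : ℕ, {ω : ℕ → V × V | ω m ∈ {q : V × V | n < m → q.1 ≠ q.2}} := by
    ext ω
    simp only [Aset, Set.mem_setOf_eq, Set.mem_inter_iff, Set.mem_iInter, Set.mem_singleton_iff]
  rw [this]
  exact (coord_measurable n _).inter (MeasurableSet.iInter fun m => coord_measurable m _)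

lemma measure_Bset {c : V → V → ℝ≥0} {u : V} {μ : Measure (ℕ → V × V)}
    (hμ : IsPairWalkMeasure (netStep c) u u μ) (v : V) (n k : ℕ) :
    μ (Bset v n k) = Fk (netStep c) v k n (u, u) := by
  have hQ : ∀ ω ω' : ℕ → V × V, (∀ i ≤ k + n, ω i = ω' i) →
      (ω n = (v, v) ∧ ∀ m, n < m → m ≤ n + k → (ω m).1 ≠ (ω m).2) →
      (ω' n = (v, v) ∧ ∀ m, n < m → m ≤ n + k → (ω' m).1 ≠ (ω' m).2) := by
    intro ω ω' hag h
    refine ⟨(hag n (by omega)) ▸ h.1, fun m h1 h2 => ?_⟩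
    rw [← hag m (by omega)]
    exact h.2 m h1 h2
  have := measure_fin_event hμ (k + n)
    (fun ω => ω n = (v, v) ∧ ∀ m, n < m → m ≤ n + k → (ω m).1 ≠ (ω m).2) hQ
  rw [show Bset v n k = {ω : ℕ → V × V |
      ω n = (v, v) ∧ ∀ m, n < m → m ≤ n + k → (ω m).1 ≠ (ω m).2} from rfl, this]
  unfold Fk
  congr 1; ext y
  exact ind_mul' Iff.rfl _

lemma measure_Cset {c : V → V → ℝ≥0} {v : V} {μ : Measure (ℕ → V × V)}
    (hμ : IsPairWalkMeasure (netStep c) v v μ) (k : ℕ) :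
    μ (Cset k) = Fk (netStep c) v k 0 (v, v) := by
  have hQ : ∀ ω ω' : ℕ → V × V, (∀ i ≤ k, ω i = ω' i) →
      (∀ m, 1 ≤ m → m ≤ k → (ω m).1 ≠ (ω m).2) →
      (∀ m, 1 ≤ m → m ≤ k → (ω' m).1 ≠ (ω' m).2) := by
    intro ω ω' hag h m h1 h2
    rw [← hag m (by omega)]
    exact h m h1 h2
  have := measure_fin_event hμ k
    (fun ω => ∀ m, 1 ≤ m → m ≤ k → (ω m).1 ≠ (ω m).2) hQ
  rw [show Cset (V := V) k = {ω : ℕ → V × V |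
      ∀ m, 1 ≤ m → m ≤ k → (ω m).1 ≠ (ω m).2} from rfl, this]
  beta_reduce
  show _ = ∑' y : Fin (k + 1) → V × V,
    (if ext k y 0 = (v, v) ∧ ext k y 0 = (v, v) ∧
        (∀ m, 0 < m → m ≤ 0 + k → (ext k y m).1 ≠ (ext k y m).2)
      then (1 : ℝ≥0∞) else 0) * W (netStep c) k (ext k y)
  congr 1; ext y
  refine ind_mul' ⟨fun hc => ⟨hc.1, fun m h1 h2 => hc.2.2 m (by omega) (by omega)⟩,
    fun hc => ⟨hc.1, hc.1, fun m h1 h2 => hc.2 m (by omega) (by omega)⟩⟩ _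

lemma Aset_iInter (v : V) (n : ℕ) : Aset v n = ⋂ k, Bset v n k := by
  ext ω
  simp only [Aset, Bset, Set.mem_setOf_eq, Set.mem_iInter]
  constructor
  · intro h k
    exact ⟨h.1, fun m h1 _ => h.2 m h1⟩
  · intro h
    exact ⟨(h 0).1, fun m h1 => (h m).2 m h1 (by omega)⟩

lemma noCollision_iInter : noCollision (V := V) = ⋂ k, Cset k := by
  ext ω
  simp only [noCollision, Cset, Set.mem_setOf_eq, Set.mem_iInter]
  constructor
  · intro h k m h1 _
    exact h m h1
  · intro h m h1
    exact h m m h1 le_rfl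

lemma lastCollision_iUnion (v : V) : lastCollisionAt v = ⋃ n, Aset v n := by
  ext ω
  simp only [lastCollisionAt, Aset, Set.mem_setOf_eq, Set.mem_iUnion]

lemma measure_Aset {c : V → V → ℝ≥0} {u : V}
    (hloc : ∀ u : V, {v : V | c u v ≠ 0}.Finite) (hpos : ∀ u : V, 0 < cWeight c u)
    {μ : Measure (ℕ → V × V)} {μv : Measure (ℕ → V × V)}
    (hμ : IsPairWalkMeasure (netStep c) u u μ) (v : V)
    (hμv : IsPairWalkMeasure (netStep c) v v μv) (n : ℕ) :
    μ (Aset v n) = (netPn c n u v * netPn c n u v) * μv noCollision := by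
  haveI := hμ.1
  haveI := hμv.1
  have hB : ∀ k, μ (Bset v n k) = (netPn c n u v * netPn c n u v) * μv (Cset k) := by
    intro k
    rw [measure_Bset hμ v n k, Fk_eq c v k n u u, measure_Cset hμv k, ← mul_assoc]
  have hanti : ∀ k, Bset v n (k + 1) ⊆ Bset v n k := by
    intro k ω h
    exact ⟨h.1, fun m h1 h2 => h.2 m h1 (by omega)⟩
  have hdir : Directed (· ⊇ ·) (Bset v n) := by
    have : Antitone (Bset v n) := antitone_nat_of_succ_le hanti
    exact this.directed_ge
  have hdirC : Directed (· ⊇ ·) (Cset (V := V)) := by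
    have : Antitone (Cset (V := V)) := antitone_nat_of_succ_le
      (fun k ω h m h1 h2 => h m h1 (by omega))
    exact this.directed_ge
  rw [Aset_iInter v n,
    Directed.measure_iInter (fun k => (Bset_measurable v n k).nullMeasurableSet) hdir
      ⟨0, measure_ne_top μ _⟩]
  rw [noCollision_iInter,
    Directed.measure_iInter (fun k => (Cset_measurable k).nullMeasurableSet) hdirC
      ⟨0, measure_ne_top μv _⟩]
  simp_rw [hB]
  rw [ENNReal.mul_iInf (f := fun k => μv (Cset k))]
  intro habs
  exact absurd habs (by
    have h1 := netPn_le_one c hloc hpos n u v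
    exact fun hc => by
      have : (netPn c n u v * netPn c n u v) ≤ 1 := mul_le_one' h1 h1
      rw [hc] at this
      exact absurd this (by simp))

end Events

/-- for the network random walk,
`Σ_u c(u) · q_last(u, v) = c(v) · q_0(v) · Σ_{n ≥ 0} p_{2n}(v, v)`
in the extended nonnegative reals. -/
theorem network_mass_transport_identity
    [Countable V] [MeasurableSpace V] [DiscreteMeasurableSpace V]
    (c : V → V → ℝ≥0)
    (hsymm : ∀ u v : V, c u v = c v u)
    (hloc : ∀ u : V, {v : V | c u v ≠ 0}.Finite)
    (hconn : (netGraph c).Connected)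
    (hpos : ∀ u : V, 0 < cWeight c u)
    (μ : V → Measure (ℕ → V × V))
    (hμ : ∀ w : V, IsPairWalkMeasure (netStep c) w w (μ w))
    (v : V) :
    ∑' u : V, cWeight c u * μ u (lastCollisionAt v)
      = cWeight c v * μ v noCollision * ∑' n : ℕ, netPn c (2 * n) v v := by
  have hA : ∀ u : V, (μ u) (lastCollisionAt v)
      = ∑' n : ℕ, (netPn c n u v * netPn c n u v) * (μ v) noCollision := by
    intro u
    rw [lastCollision_iUnion v]
    have hdisj : Pairwise (Function.onFun Disjoint (Aset (V := V) v)) := by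
      intro n n' hne
      refine Set.disjoint_left.mpr ?_
      intro ω h1 h2
      rcases lt_or_gt_of_ne hne with h | h
      · exact (h1.2 n' h) (by rw [h2.1])
      · exact (h2.2 n h) (by rw [h1.1])
    rw [measure_iUnion hdisj (fun n => Aset_measurable v n)]
    congr 1
    ext n
    exact measure_Aset hloc hpos (hμ u) v (hμ v) n
  calc ∑' u : V, cWeight c u * μ u (lastCollisionAt v)
      = ∑' u : V, ∑' n : ℕ,
          (cWeight c u * (netPn c n u v * netPn c n u v)) * (μ v) noCollision := by
        congr 1; ext u
        rw [hA u, ← ENNReal.tsum_mul_left]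
        congr 1; ext n; ring
    _ = ∑' n : ℕ, ∑' u : V,
          (cWeight c u * (netPn c n u v * netPn c n u v)) * (μ v) noCollision :=
        ENNReal.tsum_comm
    _ = ∑' n : ℕ, (cWeight c v * netPn c (2 * n) v v) * (μ v) noCollision := by
        congr 1; ext n
        rw [ENNReal.tsum_mul_right, key_sum c hloc hpos hsymm n v]
    _ = cWeight c v * (μ v) noCollision * ∑' n : ℕ, netPn c (2 * n) v v := by
        rw [← ENNReal.tsum_mul_left]
        congr 1; ext n; ring

end CollisionsStmt
end

section
/- Suppose G is not bipartite (equivalently, G contains an odd cycle) and G has the infinite collision property. Then for every pair of vertices u and v, two independent simple random walks started at u and at v respectively collide at infinitely many times almost surely. -/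
open MeasureTheory
open scoped ENNReal Classical

namespace CollisionsStmt

variable {V : Type*}

/-- One-step transition probabilities of the simple random walk on `G`:
`p(u,v) = 1/deg u` if `v` is adjacent to `u`, and `0` otherwise. -/
noncomputable def step (G : SimpleGraph V) [G.LocallyFinite] (u v : V) : ℝ≥0∞ :=
  if G.Adj u v then ((G.degree u : ℝ≥0∞))⁻¹ else 0

/-- The `n`-step transition probabilities of the simple random walk on `G`. -/
noncomputable def pn (G : SimpleGraph V) [G.LocallyFinite] : ℕ → V → V → ℝ≥0∞
  | 0, u, v => if u = v then 1 else 0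
  | n + 1, u, v => ∑' w, step G u w * pn G n w v

/-- The event that the two walks never collide (including at time `0`). -/
def neverCollide : Set (ℕ → V × V) := {ω | ∀ n : ℕ, (ω n).1 ≠ (ω n).2}

section Aux
set_option linter.unusedSectionVars false
variable [Countable V] [MeasurableSpace V] [DiscreteMeasurableSpace V]
variable {G : SimpleGraph V} [G.LocallyFinite]

lemma step_ne_zero {u v : V} (h : G.Adj u v) : step G u v ≠ 0 := by
  simp [step, h]

lemma tsum_step (hdeg : ∀ v : V, 0 < G.degree v) (u : V) : ∑' v, step G u v = 1 := by
  have h1 : ∑' v, step G u v = ∑ v ∈ G.neighborFinset u, ((G.degree u : ℝ≥0∞))⁻¹ := by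
    rw [tsum_eq_sum (s := G.neighborFinset u)
      (fun v hv => by
        have hna : ¬ G.Adj u v := fun h => hv ((SimpleGraph.mem_neighborFinset G u v).mpr h)
        simp [step, hna])]
    exact Finset.sum_congr rfl fun v hv => by
      simp [step, (SimpleGraph.mem_neighborFinset G u v).mp hv]
  rw [h1, Finset.sum_const, nsmul_eq_mul]
  rw [show (G.neighborFinset u).card = G.degree u from rfl]
  exact ENNReal.mul_inv_cancel (by exact_mod_cast (hdeg u).ne') (ENNReal.natCast_ne_top _)

lemma tsum_pn (hdeg : ∀ v : V, 0 < G.degree v) : ∀ (n : ℕ) (u : V), ∑' a, pn G n u a = 1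
  | 0, u => by
    simp only [pn]
    rw [tsum_eq_single u (fun b hb => by simp [Ne.symm hb])]
    simp
  | n + 1, u => by
    simp only [pn]
    rw [ENNReal.tsum_comm]
    calc ∑' w, ∑' a, step G u w * pn G n w a
        = ∑' w, step G u w * ∑' a, pn G n w a := tsum_congr fun w => ENNReal.tsum_mul_left
      _ = ∑' w, step G u w := tsum_congr fun w => by rw [tsum_pn hdeg n w, mul_one]
      _ = 1 := tsum_step hdeg u

lemma pn_ne_zero_of_walk : ∀ {a b : V} (W : G.Walk a b), pn G W.length a b ≠ 0 := by
  intro a b W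
  induction W with
  | nil => simp [pn]
  | @cons a c b h W ih =>
    rw [SimpleGraph.Walk.length_cons]
    simp only [pn]
    intro hzero
    have hle := ENNReal.le_tsum (f := fun z => step G a z * pn G W.length z b) c
    rw [hzero] at hle
    exact mul_ne_zero (step_ne_zero h) ih (le_zero_iff.mp hle)

lemma exists_walk_add_two (hdeg : ∀ v : V, 0 < G.degree v) {a b : V} (W : G.Walk a b) (t : ℕ) :
    ∃ W' : G.Walk a b, W'.length = W.length + 2 * t := by
  induction t with
  | zero => exact ⟨W, by simp⟩
  | succ t ih =>
    obtain ⟨W', hW'⟩ := ih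
    obtain ⟨c, hc⟩ := (G.degree_pos_iff_exists_adj b).mp (hdeg b)
    refine ⟨W'.append (SimpleGraph.Walk.cons hc (SimpleGraph.Walk.cons hc.symm SimpleGraph.Walk.nil)), ?_⟩
    simp [SimpleGraph.Walk.length_append, hW']
    ring

lemma exists_odd_closed_walk (hconn : G.Connected)
    (hnotbip : ¬ ∃ A : Set V, ∀ u v : V, G.Adj u v → (u ∈ A ↔ v ∉ A)) (u : V) :
    ∃ W : G.Walk u u, Odd W.length := by
  set A : Set V := {x | ∃ W : G.Walk u x, Even W.length} with hA
  have h : ¬ ∀ a b : V, G.Adj a b → (a ∈ A ↔ b ∉ A) := fun h => hnotbip ⟨A, h⟩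
  push_neg at h
  obtain ⟨a, b, hadj, hiff⟩ := h
  have keyA : ∀ x : V, x ∉ A → ∃ W : G.Walk u x, Odd W.length := by
    intro x hx
    obtain ⟨W⟩ := hconn.preconnected u x
    rcases Nat.even_or_odd W.length with he | ho
    · exact absurd ⟨W, he⟩ hx
    · exact ⟨W, ho⟩
  rcases hiff with ⟨ha, hb⟩ | ⟨ha, hb⟩
  · obtain ⟨W1, h1⟩ := ha
    obtain ⟨W2, h2⟩ := hb
    refine ⟨W1.append (SimpleGraph.Walk.cons hadj W2.reverse), ?_⟩
    rw [SimpleGraph.Walk.length_append, SimpleGraph.Walk.length_cons,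
      SimpleGraph.Walk.length_reverse]
    obtain ⟨c1, hc1⟩ := h1
    obtain ⟨c2, hc2⟩ := h2
    exact ⟨c1 + c2, by omega⟩
  · obtain ⟨W1, h1⟩ := keyA a ha
    obtain ⟨W2, h2⟩ := keyA b hb
    refine ⟨W1.append (SimpleGraph.Walk.cons hadj W2.reverse), ?_⟩
    rw [SimpleGraph.Walk.length_append, SimpleGraph.Walk.length_cons,
      SimpleGraph.Walk.length_reverse]
    obtain ⟨c1, hc1⟩ := h1
    obtain ⟨c2, hc2⟩ := h2
    exact ⟨c1 + c2 + 1, by omega⟩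

lemma exists_pn_pos (hdeg : ∀ v : V, 0 < G.degree v) (hconn : G.Connected)
    (hnotbip : ¬ ∃ A : Set V, ∀ u v : V, G.Adj u v → (u ∈ A ↔ v ∉ A)) (u v : V) :
    ∃ n : ℕ, pn G n u u ≠ 0 ∧ pn G n u v ≠ 0 := by
  obtain ⟨Wk, hk⟩ := exists_odd_closed_walk hconn hnotbip u
  obtain ⟨Wv⟩ := hconn.preconnected u v
  obtain ⟨Wv', hv'⟩ := exists_walk_add_two hdeg Wv Wk.length
  have huu : ∃ W : G.Walk u u, W.length = Wv.length + 2 * Wk.length := by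
    obtain ⟨c2, hc2⟩ := hk
    rcases Nat.even_or_odd Wv.length with ⟨c, hc⟩ | ⟨c, hc⟩
    · obtain ⟨W', h'⟩ := exists_walk_add_two hdeg (SimpleGraph.Walk.nil : G.Walk u u) (c + Wk.length)
      exact ⟨W', by simp at h'; omega⟩
    · obtain ⟨W', h'⟩ := exists_walk_add_two hdeg Wk (c + c2 + 1)
      exact ⟨W', by omega⟩
  obtain ⟨Wu, hWu⟩ := huu
  refine ⟨Wv.length + 2 * Wk.length, ?_, ?_⟩
  · have := pn_ne_zero_of_walk Wu; rwa [hWu] at this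
  · have := pn_ne_zero_of_walk Wv'; rwa [hv'] at this


/-- Cylinder sets. -/
def cyl (m : ℕ) (x : ℕ → V × V) : Set (ℕ → V × V) := {ω | ∀ i ≤ m, ω i = x i}

lemma measurableSet_cyl (m : ℕ) (x : ℕ → V × V) : MeasurableSet (cyl m x) := by
  have h : cyl m x = ⋂ (i : ℕ) (_ : i ≤ m), (fun ω : ℕ → V × V => ω i) ⁻¹' {x i} := by
    ext ω; simp [cyl]
  rw [h]
  exact MeasurableSet.iInter fun i => MeasurableSet.iInter fun _ =>
    (measurable_pi_apply i) (measurableSet_singleton _)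

lemma generateFrom_cyl [Nonempty V] :
    (inferInstance : MeasurableSpace (ℕ → V × V)) =
      MeasurableSpace.generateFrom {s : Set (ℕ → V × V) | ∃ m x, s = cyl m x} := by
  refine le_antisymm ?_ (MeasurableSpace.generateFrom_le ?_)
  · have key : ∀ (k : ℕ) (a : V × V),
        MeasurableSet[MeasurableSpace.generateFrom {s : Set (ℕ → V × V) | ∃ m x, s = cyl m x}]
          ((fun ω : ℕ → V × V => ω k) ⁻¹' {a}) := by
      intro k a
      have hset : ((fun ω : ℕ → V × V => ω k) ⁻¹' {a} : Set (ℕ → V × V)) =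
          ⋃ (y : Fin (k + 1) → V × V) (_ : y ⟨k, Nat.lt_succ_self k⟩ = a),
            cyl k (fun i => if h : i < k + 1 then y ⟨i, h⟩ else Classical.arbitrary _) := by
        ext ω
        simp only [Set.mem_preimage, Set.mem_singleton_iff, Set.mem_iUnion, cyl,
          Set.mem_setOf_eq]
        constructor
        · intro hk
          refine ⟨fun i => ω i, hk, fun i hi => ?_⟩
          rw [dif_pos (by omega)]
        · rintro ⟨y, hy, hcyl⟩
          have := hcyl k le_rfl
          rw [dif_pos (Nat.lt_succ_self k)] at this
          rw [this, hy]
      rw [hset]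
      exact MeasurableSet.iUnion fun y => MeasurableSet.iUnion fun _ =>
        MeasurableSpace.measurableSet_generateFrom ⟨k, _, rfl⟩
    rw [show (inferInstance : MeasurableSpace (ℕ → V × V)) =
      ⨆ k, MeasurableSpace.comap (fun ω : ℕ → V × V => ω k) inferInstance from rfl]
    refine iSup_le fun k => ?_
    intro s hs
    obtain ⟨s', -, rfl⟩ := hs
    have hu : (fun ω : ℕ → V × V => ω k) ⁻¹' s' =
        ⋃ a ∈ s', (fun ω : ℕ → V × V => ω k) ⁻¹' {a} := by
      ext ω; simp
    rw [hu]
    exact MeasurableSet.biUnion (Set.to_countable s') fun a _ => key k a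
  · rintro s ⟨m, x, rfl⟩
    exact measurableSet_cyl m x

lemma isPiSystem_cyl :
    IsPiSystem {s : Set (ℕ → V × V) | ∃ m x, s = cyl m x} := by
  rintro s ⟨m, x, rfl⟩ t ⟨m', x', rfl⟩ hne
  obtain ⟨ω, hω1, hω2⟩ := hne
  rcases le_total m m' with h | h
  · refine ⟨m', x', ?_⟩
    ext τ
    simp only [cyl, Set.mem_inter_iff, Set.mem_setOf_eq]
    exact ⟨fun ⟨_, h2⟩ => h2, fun h2 =>
      ⟨fun i hi => by rw [h2 i (hi.trans h), ← hω2 i (hi.trans h), hω1 i hi], h2⟩⟩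
  · refine ⟨m, x, ?_⟩
    ext τ
    simp only [cyl, Set.mem_inter_iff, Set.mem_setOf_eq]
    exact ⟨fun ⟨h1, _⟩ => h1, fun h1 =>
      ⟨h1, fun i hi => by rw [h1 i (hi.trans h), ← hω1 i (hi.trans h), hω2 i hi]⟩⟩

/-- The unit shift on path space. -/
def shf (ω : ℕ → V × V) : ℕ → V × V := fun m => ω (m + 1)

lemma measurable_shf : Measurable (shf (V := V)) :=
  measurable_pi_lambda _ fun m => measurable_pi_apply (m + 1)

lemma measurableSet_infCollisions : MeasurableSet (infCollisions (V := V)) := by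
  have h : infCollisions (V := V) =
      ⋂ (N : ℕ), ⋃ (n : ℕ) (_ : N ≤ n), {ω : ℕ → V × V | (ω n).1 = (ω n).2} := by
    ext ω
    simp only [infCollisions, Set.mem_setOf_eq, Set.mem_iInter, Set.mem_iUnion]
    constructor
    · intro h N
      obtain ⟨n, hn, hn2⟩ := h.exists_gt N
      exact ⟨n, hn2.le, hn⟩
    · intro h
      apply Set.infinite_of_not_bddAbove
      rintro ⟨N, hN⟩
      obtain ⟨n, hn, hc⟩ := h (N + 1)
      exact absurd (hN hc) (by omega)
  rw [h]
  refine MeasurableSet.iInter fun N => MeasurableSet.iUnion fun n =>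
    MeasurableSet.iUnion fun _ => ?_
  show MeasurableSet ((fun ω : ℕ → V × V => ω n) ⁻¹' {p : V × V | p.1 = p.2})
  exact (measurable_pi_apply n) ((Set.to_countable _).measurableSet)

lemma shf_preimage_infCollisions :
    shf ⁻¹' (infCollisions (V := V)) = infCollisions := by
  ext ω
  simp only [infCollisions, Set.mem_preimage, Set.mem_setOf_eq, shf]
  constructor
  · intro h
    have hsub : (fun m => m + 1) '' {m | (ω (m + 1)).1 = (ω (m + 1)).2} ⊆
        {n | (ω n).1 = (ω n).2} := by
      rintro _ ⟨m, hm, rfl⟩; exact hm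
    exact Set.Infinite.mono hsub (h.image (fun a b h => by omega))
  · intro h
    have h2 : ({n | (ω n).1 = (ω n).2} \ {0}).Infinite := h.diff (Set.finite_singleton 0)
    have h3 : ({n | (ω n).1 = (ω n).2} \ {0}) ⊆ Set.range (fun m => m + 1) := by
      rintro n ⟨hn, hn0⟩
      simp only [Set.mem_singleton_iff] at hn0
      exact ⟨n - 1, show n - 1 + 1 = n by omega⟩
    exact (h2.preimage h3).mono fun m hm => hm.1


/-- Prepend a state to a path. -/
def consP (p : V × V) (x : ℕ → V × V) : ℕ → V × V := fun i => Nat.casesOn i p fun j => x j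

lemma one_step (G : SimpleGraph V) [G.LocallyFinite] (hdeg : ∀ v : V, 0 < G.degree v)
    (μ : V → V → Measure (ℕ → V × V))
    (hμ : ∀ a b : V, IsPairWalkMeasure (step G) a b (μ a b)) (u v : V)
    {B : Set (ℕ → V × V)} (hB : MeasurableSet B) :
    μ u v (shf ⁻¹' B) = ∑' p : V × V, (step G u p.1 * step G v p.2) * μ p.1 p.2 B := by
  haveI : Nonempty V := ⟨u⟩
  haveI := (hμ u v).1
  haveI : IsProbabilityMeasure (Measure.map shf (μ u v)) :=
    Measure.isProbabilityMeasure_map measurable_shf.aemeasurable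
  have hmain : Measure.map shf (μ u v) =
      Measure.sum (fun p : V × V => (step G u p.1 * step G v p.2) • μ p.1 p.2) := by
    refine ext_of_generate_finite _ generateFrom_cyl isPiSystem_cyl ?_ ?_
    · rintro s ⟨m, x, rfl⟩
      rw [Measure.map_apply measurable_shf (measurableSet_cyl m x),
        Measure.sum_apply _ (measurableSet_cyl m x)]
      have hdecomp : shf ⁻¹' cyl m x = ⋃ p : V × V, cyl (m + 1) (consP p x) := by
        ext ω
        simp only [Set.mem_preimage, cyl, Set.mem_setOf_eq, Set.mem_iUnion, shf]
        constructor
        · intro h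
          refine ⟨ω 0, fun i hi => ?_⟩
          match i, hi with
          | 0, _ => rfl
          | j + 1, hj => exact h j (by omega)
        · rintro ⟨p, hp⟩ i hi
          exact hp (i + 1) (by omega)
      have hdisj : Pairwise (Function.onFun Disjoint fun p : V × V => cyl (m + 1) (consP p x)) := by
        intro p q hpq
        rw [Function.onFun, Set.disjoint_left]
        intro ω hω1 hω2
        exact hpq ((hω1 0 (by omega)).symm.trans (hω2 0 (by omega)))
      rw [hdecomp, measure_iUnion hdisj fun p => measurableSet_cyl _ _]
      have hterm : ∀ p : V × V, μ u v (cyl (m + 1) (consP p x)) =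
          if p = (u, v) then (step G u (x 0).1 * step G v (x 0).2) *
            ∏ i ∈ Finset.range m,
              (step G (x i).1 (x (i + 1)).1 * step G (x i).2 (x (i + 1)).2) else 0 := by
        intro p
        rw [show cyl (m + 1) (consP p x) = {ω | ∀ i ≤ m + 1, ω i = consP p x i} from rfl,
          (hμ u v).2 (m + 1) (consP p x)]
        by_cases hp : p = (u, v)
        · rw [if_pos (show consP p x 0 = (u, v) from hp), if_pos hp, one_mul,
            Finset.prod_range_succ']
          simp only [consP]
          rw [hp]
          exact mul_comm _ _
        · rw [if_neg (show ¬ consP p x 0 = (u, v) from hp), if_neg hp, zero_mul]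
      rw [tsum_congr hterm, tsum_eq_single (u, v) (fun p hp => by rw [if_neg hp]),
        if_pos rfl]
      have hterm2 : ∀ p : V × V,
          ((step G u p.1 * step G v p.2) • μ p.1 p.2) (cyl m x) =
          if x 0 = p then (step G u p.1 * step G v p.2) *
            ∏ i ∈ Finset.range m,
              (step G (x i).1 (x (i + 1)).1 * step G (x i).2 (x (i + 1)).2) else 0 := by
        intro p
        rw [Measure.smul_apply, smul_eq_mul,
          show cyl m x = {ω | ∀ i ≤ m, ω i = x i} from rfl, (hμ p.1 p.2).2 m x]
        by_cases hp : x 0 = p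
        · rw [if_pos (by rw [hp]), if_pos hp, one_mul]
        · rw [if_neg (by rw [Prod.mk.eta] at *; exact hp), if_neg hp]
          simp
      rw [tsum_congr hterm2, tsum_eq_single (x 0) (fun p hp => by rw [if_neg (Ne.symm hp)]),
        if_pos rfl]
    · rw [Measure.map_apply measurable_shf MeasurableSet.univ, Set.preimage_univ,
        measure_univ, Measure.sum_apply _ MeasurableSet.univ]
      symm
      have : ∀ p : V × V, ((step G u p.1 * step G v p.2) • μ p.1 p.2) Set.univ =
          step G u p.1 * step G v p.2 := by
        intro p
        haveI := (hμ p.1 p.2).1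
        rw [Measure.smul_apply, measure_univ, smul_eq_mul, mul_one]
      rw [tsum_congr this, ENNReal.tsum_prod']
      calc ∑' a, ∑' b, step G u (a, b).1 * step G v (a, b).2
          = ∑' a, step G u a * ∑' b, step G v b := tsum_congr fun a => by
            show (∑' b, step G u a * step G v b) = step G u a * ∑' b, step G v b
            exact ENNReal.tsum_mul_left
        _ = ∑' a, step G u a := by rw [tsum_step hdeg]; simp
        _ = 1 := tsum_step hdeg u
  rw [← Measure.map_apply measurable_shf hB, hmain, Measure.sum_apply _ hB]
  exact tsum_congr fun p => by rw [Measure.smul_apply, smul_eq_mul]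

lemma nstep (G : SimpleGraph V) [G.LocallyFinite] (hdeg : ∀ v : V, 0 < G.degree v)
    (μ : V → V → Measure (ℕ → V × V))
    (hμ : ∀ a b : V, IsPairWalkMeasure (step G) a b (μ a b)) :
    ∀ (n : ℕ) (u v : V), μ u v infCollisions =
      ∑' r : V × V, (pn G n u r.1 * pn G n v r.2) * μ r.1 r.2 infCollisions := by
  intro n
  induction n with
  | zero =>
    intro u v
    rw [tsum_eq_single (u, v) ?_]
    · simp [pn]
    · rintro ⟨a, b⟩ hab
      simp only [pn]
      by_cases h1 : u = a
      · by_cases h2 : v = b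
        · exact absurd (by rw [h1, h2]) hab
        · simp [h2]
      · simp [h1]
  | succ n ih =>
    intro u v
    have h1 : μ u v infCollisions = μ u v (shf ⁻¹' infCollisions) := by
      rw [shf_preimage_infCollisions]
    rw [h1, one_step G hdeg μ hμ u v measurableSet_infCollisions]
    calc ∑' p : V × V, (step G u p.1 * step G v p.2) * μ p.1 p.2 infCollisions
        = ∑' p : V × V, ∑' r : V × V, (step G u p.1 * step G v p.2) *
            ((pn G n p.1 r.1 * pn G n p.2 r.2) * μ r.1 r.2 infCollisions) := by
          refine tsum_congr fun p => ?_
          rw [ih p.1 p.2, ENNReal.tsum_mul_left]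
      _ = ∑' r : V × V, (∑' p : V × V, (step G u p.1 * step G v p.2) *
            (pn G n p.1 r.1 * pn G n p.2 r.2)) * μ r.1 r.2 infCollisions := by
          rw [ENNReal.tsum_comm]
          refine tsum_congr fun r => ?_
          rw [← ENNReal.tsum_mul_right]
          exact tsum_congr fun p => by ring
      _ = ∑' r : V × V, (pn G (n + 1) u r.1 * pn G (n + 1) v r.2) *
            μ r.1 r.2 infCollisions := by
          refine tsum_congr fun r => ?_
          congr 1
          simp only [pn]
          rw [show (∑' w, step G u w * pn G n w r.1) * (∑' w, step G v w * pn G n w r.2)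
              = ∑' a, ∑' b, (step G u a * pn G n a r.1) * (step G v b * pn G n b r.2) from by
            rw [← ENNReal.tsum_mul_right]
            exact tsum_congr fun a => ENNReal.tsum_mul_left.symm]
          rw [ENNReal.tsum_prod']
          exact tsum_congr fun a => tsum_congr fun b => by ring


end Aux

/-- if `G` is not bipartite and has the infinite collision property, then
two independent walks started at any two vertices collide infinitely often a.s. -/
theorem nonbipartite_collision_from_any_starts
    [Countable V] [MeasurableSpace V] [DiscreteMeasurableSpace V]
    (G : SimpleGraph V) [G.LocallyFinite]
    (hconn : G.Connected) (hdeg : ∀ v : V, 0 < G.degree v)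
    (hnotbip : ¬ ∃ A : Set V, ∀ u v : V, G.Adj u v → (u ∈ A ↔ v ∉ A))
    (μ : V → V → Measure (ℕ → V × V))
    (hμ : ∀ a b : V, IsPairWalkMeasure (step G) a b (μ a b))
    (hICP : ∀ w : V, μ w w infCollisions = 1)
    (u v : V) :
    μ u v infCollisions = 1 := by
  obtain ⟨n, h1, h2⟩ := exists_pn_pos hdeg hconn hnotbip u v
  have hA := nstep G hdeg μ hμ n u u
  rw [hICP u] at hA
  have hcsum : ∑' r : V × V, pn G n u r.1 * pn G n u r.2 = 1 := by
    rw [ENNReal.tsum_prod']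
    calc ∑' a, ∑' b, pn G n u (a, b).1 * pn G n u (a, b).2
        = ∑' a, pn G n u a * ∑' b, pn G n u b := tsum_congr fun a => by
          show (∑' b, pn G n u a * pn G n u b) = pn G n u a * ∑' b, pn G n u b
          exact ENNReal.tsum_mul_left
      _ = 1 := by
          rw [tsum_pn hdeg n u]
          simp only [mul_one]
          exact tsum_pn hdeg n u
  have hle : ∀ r : V × V, (pn G n u r.1 * pn G n u r.2) * μ r.1 r.2 infCollisions ≤
      pn G n u r.1 * pn G n u r.2 := fun r => by
    haveI := (hμ r.1 r.2).1
    calc (pn G n u r.1 * pn G n u r.2) * μ r.1 r.2 infCollisions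
        ≤ (pn G n u r.1 * pn G n u r.2) * 1 := mul_le_mul_right prob_le_one _
      _ = pn G n u r.1 * pn G n u r.2 := mul_one _
  by_contra hne
  have hglt : μ u v infCollisions < 1 := by
    haveI := (hμ u v).1
    exact lt_of_le_of_ne prob_le_one hne
  have hc0 : pn G n u u * pn G n u v ≠ 0 := mul_ne_zero h1 h2
  have hctop : pn G n u u * pn G n u v ≠ ⊤ := by
    have hle1 : pn G n u u * pn G n u v ≤ 1 := by
      rw [← hcsum]
      exact ENNReal.le_tsum ((u, v) : V × V)
    exact (hle1.trans_lt ENNReal.one_lt_top).ne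
  have hlt : (pn G n u u * pn G n u v) * μ u v infCollisions < pn G n u u * pn G n u v := by
    nth_rewrite 2 [← mul_one (pn G n u u * pn G n u v)]
    exact (ENNReal.mul_lt_mul_iff_right hc0 hctop).mpr hglt
  have hfin : ∑' r : V × V, (pn G n u r.1 * pn G n u r.2) * μ r.1 r.2 infCollisions ≠ ⊤ := by
    rw [← hA]
    exact ENNReal.one_ne_top
  have hcon := ENNReal.tsum_lt_tsum (i := ((u, v) : V × V)) hfin hle hlt
  rw [← hA, hcsum] at hcon
  exact lt_irrefl 1 hcon
end CollisionsStmt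
end
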